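/- Let A ∈ M_d(ℤ) with det A ≠ 0 and det(A − I) ≠ 0, and let p₁, ..., p_s be prime numbers with gcd(p_i, det A) = 1 for every i. Then there exist an infinite set I ⊆ ℕ and an integer γ ≥ 1 such that for every i ∈ {1,...,s} and every N ∈ I, p_i^γ does not divide det(A^N − I). -/

import Mathlib

theorem stmt_6 (d s : ℕ) (A : Matrix (Fin d) (Fin d) ℤ)
    (hA : A.det ≠ 0) (hAI : (A - 1).det ≠ 0)
    (p : Fin s → ℕ) (hp : ∀ i, (p i).Prime)
    (hcop : ∀ i, IsCoprime ((p i : ℤ)) A.det) :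
    ∃ I : Set ℕ, I.Infinite ∧ ∃ γ : ℕ, 1 ≤ γ ∧
      ∀ i, ∀ N ∈ I, ¬ ((p i : ℤ) ^ γ ∣ (A ^ N - 1).det) := by
  set D : ℕ := (A - 1).det.natAbs with hD
  have hDpos : 0 < D := Int.natAbs_pos.mpr hAI
  set γ : ℕ := max D 1 with hγdef
  have hγ1 : 1 ≤ γ := le_max_right _ _
  -- key: p_i^γ does not divide det (A - 1)
  have hkey : ∀ i, ¬ ((p i : ℤ) ^ γ ∣ (A - 1).det) := by
    intro i hdvd
    have h1 : (p i) ^ γ ∣ D := by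
      have := Int.natAbs_dvd_natAbs.mpr hdvd
      simpa [Int.natAbs_pow] using this
    have h2 : (p i) ^ γ ≤ D := Nat.le_of_dvd hDpos h1
    have h3 : 2 ^ γ ≤ (p i) ^ γ := Nat.pow_le_pow_left (hp i).two_le _
    have h4 : 2 ^ D ≤ 2 ^ γ := Nat.pow_le_pow_right (by norm_num) (le_max_left _ _)
    have h5 : D < 2 ^ D := Nat.lt_two_pow_self
    omega
  -- the modulus
  set M : ℕ := ∏ i, (p i) ^ γ with hM
  have hMpos : 0 < M := Finset.prod_pos (fun i _ => pow_pos (hp i).pos _)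
  haveI : NeZero M := ⟨hMpos.ne'⟩
  have hdvdM : ∀ i, ((p i : ℤ)) ^ γ ∣ (M : ℤ) := by
    intro i
    have : (p i) ^ γ ∣ M := Finset.dvd_prod_of_mem _ (Finset.mem_univ i)
    exact_mod_cast Int.natCast_dvd_natCast.mpr this
  -- A is invertible mod M
  have hcopM : IsCoprime ((M : ℤ)) A.det := by
    have : IsCoprime (∏ i, ((p i : ℤ)) ^ γ) A.det :=
      IsCoprime.prod_left (fun i _ => (hcop i).pow_left)
    simpa [hM] using this
  set f : ℤ →+* ZMod M := Int.castRingHom (ZMod M) with hf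
  set B : Matrix (Fin d) (Fin d) (ZMod M) := f.mapMatrix A with hB
  have hBdet : IsUnit B.det := by
    obtain ⟨u, v, huv⟩ := hcopM
    have : (v : ZMod M) * B.det = 1 := by
      have h0 : ((M : ℤ) : ZMod M) = 0 := by
        simp [ZMod.natCast_self]
      have := congrArg (fun x : ℤ => (x : ZMod M)) huv
      simp only [Int.cast_add, Int.cast_mul, Int.cast_one, h0] at this
      rw [← RingHom.map_det]
      simpa [hf] using this
    exact IsUnit.of_mul_eq_one _ ((mul_comm _ _).trans this)
  have hBunit : IsUnit B := (Matrix.isUnit_iff_isUnit_det B).mpr hBdet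
  obtain ⟨u, hu⟩ := hBunit
  set n₀ : ℕ := orderOf u with hn₀
  have hn₀pos : 0 < n₀ := orderOf_pos u
  have hun : u ^ n₀ = 1 := pow_orderOf_eq_one u
  have hBn : B ^ n₀ = 1 := by
    rw [← hu, ← Units.val_pow_eq_pow_val, hun, Units.val_one]
  refine ⟨Set.range (fun k => n₀ * k + 1), ?_, γ, hγ1, ?_⟩
  · apply Set.infinite_range_of_injective
    intro a b hab
    simp only at hab
    exact Nat.eq_of_mul_eq_mul_left hn₀pos (by omega)
  · rintro i N ⟨k, rfl⟩ hdvd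
    simp only at hdvd
    -- B ^ (n₀ k + 1) = B
    have hBN : B ^ (n₀ * k + 1) = B := by
      rw [pow_add, pow_mul, hBn, one_pow, one_mul, pow_one]
    -- cast of det (A^N - 1) equals cast of det (A - 1)
    have hcast : (((A ^ (n₀ * k + 1) - 1).det : ℤ) : ZMod M)
        = (((A - 1).det : ℤ) : ZMod M) := by
      have h1 : f.mapMatrix (A ^ (n₀ * k + 1) - 1) = B ^ (n₀ * k + 1) - 1 := by
        simp [hB, map_sub, map_pow]
      have h2 : f.mapMatrix (A - 1) = B - 1 := by
        simp [hB, map_sub]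
      calc (((A ^ (n₀ * k + 1) - 1).det : ℤ) : ZMod M)
          = (f.mapMatrix (A ^ (n₀ * k + 1) - 1)).det := (RingHom.map_det f _)
        _ = (B ^ (n₀ * k + 1) - 1).det := by rw [h1]
        _ = (B - 1).det := by rw [hBN]
        _ = (f.mapMatrix (A - 1)).det := by rw [h2]
        _ = (((A - 1).det : ℤ) : ZMod M) := (RingHom.map_det f _).symm
    have hmodM : ((A ^ (n₀ * k + 1) - 1).det) ≡ ((A - 1).det) [ZMOD (M : ℤ)] :=
      (ZMod.intCast_eq_intCast_iff' _ _ _).mp (by simpa using hcast)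
    have hmodp : ((A ^ (n₀ * k + 1) - 1).det) ≡ ((A - 1).det) [ZMOD ((p i : ℤ) ^ γ)] :=
      hmodM.of_dvd (hdvdM i)
    have : (p i : ℤ) ^ γ ∣ (A - 1).det := by
      have hd : (p i : ℤ) ^ γ ∣ ((A - 1).det - (A ^ (n₀ * k + 1) - 1).det) :=
        Int.ModEq.dvd hmodp
      have := dvd_add hdvd hd
      simpa using this
    exact hkey i this
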